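/- In the semi-parametric mixture model f = (1−λ)b + λs with known background b and unknown signal density s supported on the signal region S, the efficient score for λ is g* = (B(C)/F(S))·I_S − (1/(1−λ))·I_C, obtained as the score g = (s−b)/f minus its L²(f)-orthogonal projection onto the nuisance tangent set Λ = { h·s/f : ∫ h·s = 0, h supported on S }. -/

import Mathlib

open MeasureTheory

/-- In the semi-parametric mixture f = (1−λ)b + λs with known
background b and unknown signal s supported on the signal region S, the efficient
score for λ is g* = (B(C)/F(S))·I_S − (1/(1−λ))·I_C: it differs from the score
g = (s−b)/f by an element h·s/f of the nuisance tangent set Λ (h supported on S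
with ∫ h·s = 0), and g* is L²(f)-orthogonal to every element of Λ. -/
theorem stmt_5 (S C : Set ℝ) (hS : MeasurableSet S) (hC : MeasurableSet C)
    (hdisj : Disjoint S C) (hcover : S ∪ C = Set.univ)
    (b s : ℝ → ℝ) (lam : ℝ) (hlam : lam ∈ Set.Ioo (0:ℝ) 1)
    (hbint : Integrable b) (hbnorm : ∫ x, b x = 1)
    (hsC : ∀ x ∈ C, s x = 0) (hsint : Integrable s) (hsnorm : ∫ x in S, s x = 1)
    (hspos : ∀ x ∈ S, 0 < s x)
    (f : ℝ → ℝ) (hf : ∀ x, f x = (1 - lam) * b x + lam * s x)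
    (hfpos : ∀ x, 0 < f x)
    (BC FS : ℝ) (hBC : BC = ∫ x in C, b x) (hFS : FS = ∫ x in S, f x)
    (hBC0 : 0 < BC) (hBC1 : BC < 1)
    (g gstar : ℝ → ℝ)
    (hg : ∀ x, g x = (s x - b x) / f x)
    (hgstar : ∀ x, gstar x = Set.indicator S (fun _ => BC / FS) x
        - Set.indicator C (fun _ => 1 / (1 - lam)) x) :
    (∃ h : ℝ → ℝ, (∀ x ∈ C, h x = 0) ∧ (∫ x in S, h x * s x = 0) ∧
      ∀ x, g x - gstar x = h x * s x / f x) ∧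
    (∀ h : ℝ → ℝ, (∀ x ∈ C, h x = 0) → IntegrableOn (fun x => h x * s x) S →
      (∫ x in S, h x * s x = 0) →
      ∫ x, gstar x * (h x * s x / f x) * f x = 0) := by
  obtain ⟨hlam0, hlam1⟩ := hlam
  have h1lam : 0 < 1 - lam := by linarith
  have hnotS : ∀ x, x ∉ S → x ∈ C := by
    intro x hx
    have : x ∈ S ∪ C := hcover ▸ Set.mem_univ x
    rcases this with h | h
    · exact absurd h hx
    · exact h
  have hSnotC : ∀ x, x ∈ S → x ∉ C := fun x hx hxC =>
    Set.disjoint_left.mp hdisj hx hxC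
  have hfne : ∀ x, f x ≠ 0 := fun x => (hfpos x).ne'
  have hbS : ∫ x in S, b x = 1 - BC := by
    have hsum : (∫ x in S, b x) + ∫ x in C, b x = 1 := by
      rw [← setIntegral_union hdisj hC hbint.integrableOn hbint.integrableOn,
        hcover, setIntegral_univ, hbnorm]
    rw [hBC] at *; linarith
  have hfint : Integrable f := by
    have h := ((hbint.const_mul (1 - lam)).add (hsint.const_mul lam))
    exact h.congr (Filter.Eventually.of_forall fun x => (hf x).symm)
  have hFSval : FS = (1 - lam) * (1 - BC) + lam := by
    rw [hFS]
    calc ∫ x in S, f x = ∫ x in S, ((1 - lam) * b x + lam * s x) := by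
          exact setIntegral_congr_fun hS (fun x _ => hf x)
      _ = (∫ x in S, (1 - lam) * b x) + ∫ x in S, lam * s x := by
          exact integral_add ((hbint.const_mul _).integrableOn)
            ((hsint.const_mul _).integrableOn)
      _ = (1 - lam) * (∫ x in S, b x) + lam * ∫ x in S, s x := by
          rw [integral_const_mul, integral_const_mul]
      _ = (1 - lam) * (1 - BC) + lam := by rw [hbS, hsnorm]; ring
  have hFSpos : 0 < FS := by
    rw [hFSval]; nlinarith
  have hFSne : FS ≠ 0 := hFSpos.ne'
  constructor
  · refine ⟨S.indicator (fun x => (g x - gstar x) * f x / s x), ?_, ?_, ?_⟩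
    · intro x hx
      exact Set.indicator_of_notMem (fun h => hSnotC x h hx) _
    · have key : ∀ x ∈ S, S.indicator (fun x => (g x - gstar x) * f x / s x) x * s x
          = s x - b x - BC / FS * f x := by
        intro x hx
        have hsx : s x ≠ 0 := (hspos x hx).ne'
        rw [Set.indicator_of_mem hx, hg, hgstar, Set.indicator_of_mem hx,
          Set.indicator_of_notMem (hSnotC x hx)]
        field_simp [hsx, hfne x]
        ring
      rw [setIntegral_congr_fun hS key]
      have h1 : ∫ x in S, (s x - b x - BC / FS * f x)
          = (∫ x in S, (s x - b x)) - ∫ x in S, BC / FS * f x :=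
        integral_sub (hsint.integrableOn.sub hbint.integrableOn)
          ((hfint.const_mul _).integrableOn)
      have h2 : ∫ x in S, (s x - b x) = (∫ x in S, s x) - ∫ x in S, b x :=
        integral_sub hsint.integrableOn hbint.integrableOn
      rw [h1, h2, integral_const_mul, hsnorm, hbS, ← hFS]
      field_simp
      ring
    · intro x
      by_cases hx : x ∈ S
      · have hsx : s x ≠ 0 := (hspos x hx).ne'
        rw [Set.indicator_of_mem hx]
        field_simp
        rw [mul_div_assoc, div_self (hfne x), mul_one]
      · have hxC : x ∈ C := hnotS x hx
        have hs0 : s x = 0 := hsC x hxC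
        have hfx : f x = (1 - lam) * b x := by rw [hf, hs0]; ring
        have hbx : b x ≠ 0 := by
          intro h0
          have := hfpos x
          rw [hfx, h0] at this; simp at this
        rw [Set.indicator_of_notMem hx, hg, hgstar, Set.indicator_of_notMem hx,
          Set.indicator_of_mem hxC, hs0, hfx]
        field_simp
        ring
  · intro h hhC hhint hhzero
    have key : ∀ x, gstar x * (h x * s x / f x) * f x
        = Set.indicator S (fun x => BC / FS * (h x * s x)) x := by
      intro x
      by_cases hx : x ∈ S
      · rw [Set.indicator_of_mem hx, hgstar, Set.indicator_of_mem hx,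
          Set.indicator_of_notMem (hSnotC x hx), mul_assoc,
          div_mul_cancel₀ _ (hfne x)]
        ring
      · rw [Set.indicator_of_notMem hx, hsC x (hnotS x hx)]
        ring
    calc ∫ x, gstar x * (h x * s x / f x) * f x
        = ∫ x, Set.indicator S (fun x => BC / FS * (h x * s x)) x :=
          integral_congr_ae (Filter.Eventually.of_forall key)
      _ = ∫ x in S, BC / FS * (h x * s x) := integral_indicator hS
      _ = BC / FS * ∫ x in S, h x * s x := integral_const_mul _ _
      _ = 0 := by rw [hhzero, mul_zero]
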